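/- Let d_1 ≥ d_2 ≥ ... ≥ d_n be a non-increasing sequence of natural numbers. There exists a simple graph G on labeled vertices v_1, ..., v_n with deg_G(v_i) = d_i for every i if and only if (1) the sum d_1 + ... + d_n is even, and (2) for every k with 1 ≤ k ≤ n, the inequality Σ_{i=1}^k d_i ≤ k(k-1) + Σ_{i=k+1}^n min(d_i, k) holds. -/

import Mathlib

open Finset


/-! ### Auxiliary sum lemmas -/

lemma eg_sum_fin_val {M : Type*} [AddCommMonoid M] (n : ℕ) (p : ℕ → Prop) [DecidablePred p]
    (g : ℕ → M) :
    ∑ i ∈ univ.filter (fun i : Fin n => p i.val), g i.val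
      = ∑ j ∈ (range n).filter p, g j := by
  rw [Finset.sum_filter, Finset.sum_filter,
    Fin.sum_univ_eq_sum_range (fun j => if p j then g j else 0)]

lemma eg_range_filter_lt (n k : ℕ) (h : k ≤ n) :
    (range n).filter (fun j => j < k) = range k := by
  ext j; simp only [mem_filter, mem_range]; omega

lemma eg_range_filter_le (n k : ℕ) :
    (range n).filter (fun j => k ≤ j) = Ico k n := by
  ext j; simp only [mem_filter, mem_range, mem_Ico]; omega

lemma eg_threshold (n : ℕ) (e : ℕ → ℕ) (he : Antitone e) (hz : ∀ j, n ≤ j → e j = 0) (k : ℕ) :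
    ∃ c, c ≤ n ∧ ∀ j, k < e j ↔ j < c := by
  classical
  set S := (range n).filter (fun j => k < e j) with hS
  refine ⟨S.card, by simpa [hS] using card_filter_le (range n) _, fun j => ?_⟩
  constructor
  · intro hj
    by_contra hc
    push_neg at hc
    have hjn : j < n := by
      by_contra hn; push_neg at hn
      have := hz j hn; omega
    have hsub : range (j+1) ⊆ S := by
      intro i hi
      simp only [mem_range] at hi
      have hij : i ≤ j := by omega
      have : e j ≤ e i := he hij
      simp only [hS, mem_filter, mem_range]
      exact ⟨by omega, by omega⟩
    have := card_le_card hsub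
    simp only [card_range] at this
    omega
  · intro hj
    by_contra hc
    push_neg at hc
    have hsub : S ⊆ range j := by
      intro i hi
      simp only [hS, mem_filter, mem_range] at hi
      simp only [mem_range]
      by_contra hij
      push_neg at hij
      have : e i ≤ e j := he hij
      omega
    have := card_le_card hsub
    simp only [card_range] at this
    omega

/-! ### The two key arithmetic claims -/

lemma eg_claimA (n : ℕ) (e : ℕ → ℕ) (he : Antitone e) (hz : ∀ j, n ≤ j → e j = 0)
    (hEG : ∀ k, 1 ≤ k → k ≤ n → ∑ j ∈ range k, e j ≤ k*(k-1) + ∑ j ∈ Ico k n, min (e j) k)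
    (t m k : ℕ) (ht : ∀ i, i ≤ t → e i = e 0) (htm : t < m) (hmn : m < n) (hm1 : 1 ≤ e m)
    (hk1 : 1 ≤ k) (hkt : k ≤ t) (hkm : e m ≤ k) (hkD : k < e 0) :
    ∑ j ∈ range k, e j + 1 ≤ k*(k-1) + ∑ j ∈ Ico k n, min (e j) k := by
  obtain ⟨c, hcn, hc⟩ := eg_threshold n e he hz k
  have hct : t < c := (hc t).1 (by rw [ht t le_rfl]; exact hkD)
  have hcm : c ≤ m := by
    by_contra h; push_neg at h
    have := (hc m).2 h; omega
  have hkc : k ≤ c := by omega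
  have hsplit : ∑ j ∈ Ico k n, min (e j) k
      = (c - k) * k + ∑ j ∈ Ico c n, e j := by
    rw [← sum_Ico_consecutive (fun j => min (e j) k) hkc (by omega)]
    congr 1
    · rw [show ∑ j ∈ Ico k c, min (e j) k = ∑ j ∈ Ico k c, k from
        sum_congr rfl (fun j hj => by
          simp only [mem_Ico] at hj
          have := (hc j).2 hj.2; omega)]
      simp [Nat.card_Ico]
    · exact sum_congr rfl (fun j hj => by
        simp only [mem_Ico] at hj
        have h1 : ¬ (k < e j) := fun h => by have := (hc j).1 h; omega
        omega)
  have hpre : ∑ j ∈ range k, e j = k * e 0 := by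
    rw [sum_congr rfl (fun j hj => ht j (by simp only [mem_range] at hj; omega))]
    simp [mul_comm]
  have hT1 : e m ≤ ∑ j ∈ Ico c n, e j :=
    single_le_sum (fun i _ => Nat.zero_le _) (mem_Ico.mpr ⟨hcm, hmn⟩)
  rw [hsplit, hpre]
  rcases le_or_gt (e 0) (c - 1) with hD | hD
  · have h1 : k * e 0 ≤ k * (c - 1) := Nat.mul_le_mul_left _ hD
    have h2 : k * (c-1) = k*(k-1) + (c-k)*k := by
      have : k - 1 + (c - k) = c - 1 := by omega
      nlinarith [this]
    omega
  · have hc0 : c ≤ e 0 := by omega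
    have hEGt := hEG (t+1) (by omega) (by omega)
    have hpre2 : ∑ j ∈ range (t+1), e j = (t+1) * e 0 := by
      rw [sum_congr rfl (fun j hj => ht j (by simp only [mem_range] at hj; omega))]
      simp
    have htail2 : ∑ j ∈ Ico (t+1) n, min (e j) (t+1)
        ≤ (c - (t+1)) * (t+1) + ∑ j ∈ Ico c n, e j := by
      rw [← sum_Ico_consecutive (fun j => min (e j) (t+1)) (by omega : t+1 ≤ c) (by omega)]
      gcongr ?_ + ?_
      · calc ∑ j ∈ Ico (t+1) c, min (e j) (t+1) ≤ ∑ j ∈ Ico (t+1) c, (t+1) :=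
              sum_le_sum (fun j _ => min_le_right _ _)
          _ = (c - (t+1)) * (t+1) := by simp [Nat.card_Ico]
      · exact sum_le_sum (fun j hj => by
          simp only [mem_Ico] at hj
          have h1 : ¬ (k < e j) := fun h => by have := (hc j).1 h; omega
          omega)
    have key : (t+1) * e 0 ≤ (t+1)*t + ((c - (t+1)) * (t+1) + ∑ j ∈ Ico c n, e j) := by
      calc (t+1) * e 0 = ∑ j ∈ range (t+1), e j := hpre2.symm
        _ ≤ (t+1)*((t+1)-1) + ∑ j ∈ Ico (t+1) n, min (e j) (t+1) := hEGt
        _ ≤ (t+1)*t + ((c - (t+1)) * (t+1) + ∑ j ∈ Ico c n, e j) := by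
            simp only [Nat.add_sub_cancel]; omega
    set T := ∑ j ∈ Ico c n, e j with hT
    have hkey : ((t:ℤ)+1) * e 0 ≤ (t+1)*t + (((c:ℤ) - (t+1)) * (t+1) + T) := by
      have h1 : ((c:ℤ) - (t+1)) = ((c - (t+1) : ℕ) : ℤ) := by push_cast; omega
      rw [h1]; exact_mod_cast key
    have hp : (0:ℤ) ≤ ((t:ℤ)+1-k) * ((e 0 : ℤ) - c) := by
      apply mul_nonneg <;> · push_cast; omega
    zify [hk1, hkc]
    linarith [hkey, hp]

lemma eg_claimB_int (K T D S : ℤ) (hK : 1 ≤ K) (hKT : K ≤ T) (hD1 : 1 ≤ D) (hDK : D ≤ K)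
    (hS : 1 ≤ S) (hpar : Even ((T+1)*D + S)) :
    K*D + 2 ≤ K*(K-1) + (T+1-K)*D + S := by
  have h1 : 0 ≤ (K-1)*(K-D) := mul_nonneg (by omega) (by omega)
  have h2 : 0 ≤ (T-K)*D := mul_nonneg (by omega) (by omega)
  rcases le_or_gt 2 S with hS2 | hS1
  · nlinarith
  · have hS1' : S = 1 := by omega
    subst hS1'
    have hodd : Odd ((T+1)*D) := by
      rcases Int.even_or_odd ((T+1)*D) with h | h
      · exfalso; rcases hpar with ⟨c, hc⟩; rcases h with ⟨b, hb⟩; omega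
      · exact h
    rw [Int.odd_mul] at hodd
    obtain ⟨⟨a, ha⟩, ⟨b, hb⟩⟩ := hodd
    rcases eq_or_lt_of_le hKT with hTK | hTK
    · have hDlt : D < K := by omega
      have hK2 : 2 ≤ K := by omega
      have h3 : 0 < (K-1)*(K-D) := mul_pos (by omega) (by omega)
      nlinarith
    · have h4 : D ≤ (T-K)*D := le_mul_of_one_le_left (by omega) (by omega)
      nlinarith

lemma eg_claimB (n : ℕ) (e : ℕ → ℕ) (he : Antitone e)
    (hsum : Even (∑ j ∈ range n, e j))
    (t m k : ℕ) (ht : ∀ i, i ≤ t → e i = e 0) (htm : t < m) (hmn : m < n) (hm1 : 1 ≤ e m)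
    (hk1 : 1 ≤ k) (hkt : k ≤ t) (hD : e 0 ≤ k) :
    ∑ j ∈ range k, e j + 2 ≤ k*(k-1) + ∑ j ∈ Ico k n, min (e j) k := by
  have he0m : e m ≤ e 0 := he (Nat.zero_le m)
  have hm0 : 1 ≤ e 0 := le_trans hm1 he0m
  have htail : ∑ j ∈ Ico k n, min (e j) k = ∑ j ∈ Ico k n, e j :=
    sum_congr rfl (fun j _ => by
      have : e j ≤ e 0 := he (Nat.zero_le j)
      omega)
  have hsplit : ∑ j ∈ Ico k n, e j = (t+1-k)*(e 0) + ∑ j ∈ Ico (t+1) n, e j := by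
    rw [← sum_Ico_consecutive e (by omega : k ≤ t+1) (by omega)]
    congr 1
    rw [sum_congr rfl (fun j hj => ht j (by simp only [mem_Ico] at hj; omega))]
    simp [Nat.card_Ico]
  have hpre : ∑ j ∈ range k, e j = k * e 0 := by
    rw [sum_congr rfl (fun j hj => ht j (by simp only [mem_range] at hj; omega))]
    simp [mul_comm]
  have htot : ∑ j ∈ range n, e j = (t+1) * e 0 + ∑ j ∈ Ico (t+1) n, e j := by
    rw [range_eq_Ico, ← sum_Ico_consecutive e (by omega : 0 ≤ t+1) (by omega : t+1 ≤ n)]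
    congr 1
    rw [← range_eq_Ico,
      sum_congr rfl (fun j hj => ht j (by simp only [mem_range] at hj; omega))]
    simp
  set S := ∑ j ∈ Ico (t+1) n, e j with hS
  have hS1 : 1 ≤ S :=
    le_trans hm1 (single_le_sum (fun i _ => Nat.zero_le _) (mem_Ico.mpr ⟨by omega, hmn⟩))
  rw [htot] at hsum
  have key := eg_claimB_int k t (e 0) S (by exact_mod_cast hk1) (by exact_mod_cast hkt)
    (by exact_mod_cast hm0) (by exact_mod_cast hD) (by exact_mod_cast hS1)
    (by
      have : (((t+1) * e 0 + S : ℕ) : ℤ) = ((t:ℤ)+1) * (e 0) + (S:ℤ) := by push_cast; ring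
      rw [← this]
      exact_mod_cast hsum.natCast (α := ℤ))
  rw [htail, hsplit, hpre]
  zify [hk1, show k ≤ t+1 by omega]
  linarith [key]

-- expansion helper
lemma eg_expand2 {s : Finset ℕ} {t m : ℕ} (f : ℕ → ℕ) (htm : t ≠ m) (hts : t ∈ s) (hms : m ∈ s) :
    ∑ j ∈ s, f j = f t + f m + ∑ j ∈ (s.erase t).erase m, f j := by
  rw [← sum_erase_add s f hts, ← sum_erase_add (s.erase t) f (mem_erase.mpr ⟨(Ne.symm htm), hms⟩)]
  ring

lemma eg_expand1 {s : Finset ℕ} {m : ℕ} (f : ℕ → ℕ) (hms : m ∈ s) :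
    ∑ j ∈ s, f j = f m + ∑ j ∈ s.erase m, f j := by
  rw [← sum_erase_add s f hms]; ring



lemma eg_step (n : ℕ) (e e' : ℕ → ℕ) (he : Antitone e) (hz : ∀ j, n ≤ j → e j = 0)
    (hEG : ∀ k, 1 ≤ k → k ≤ n → ∑ j ∈ range k, e j ≤ k*(k-1) + ∑ j ∈ Ico k n, min (e j) k)
    (hsum : Even (∑ j ∈ range n, e j))
    (t m : ℕ) (ht : ∀ i, i ≤ t → e i = e 0) (htm : t < m) (hmn : m < n) (hm1 : 1 ≤ e m)
    (hdef : ∀ j, e' j = if j = t ∨ j = m then e j - 1 else e j)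
    (k : ℕ) (hk1 : 1 ≤ k) (hkn : k ≤ n) :
    ∑ j ∈ range k, e' j ≤ k*(k-1) + ∑ j ∈ Ico k n, min (e' j) k := by
  have het : e t = e 0 := ht t le_rfl
  have he0m : e m ≤ e 0 := he (Nat.zero_le m)
  have hm0 : 1 ≤ e 0 := le_trans hm1 he0m
  have he't : e' t = e 0 - 1 := by simp [hdef, het]
  have he'm : e' m = e m - 1 := by simp [hdef]
  have htmne : t ≠ m := Nat.ne_of_lt htm
  have hoff : ∀ j, j ≠ t → j ≠ m → e' j = e j := fun j h1 h2 => by simp [hdef, h1, h2]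
  rcases lt_or_ge m k with hmk | hkm
  · -- Case C1 : m < k; both in prefix
    have hexp1 : ∑ j ∈ range k, e' j = e' t + e' m + ∑ j ∈ ((range k).erase t).erase m, e' j :=
      eg_expand2 e' htmne (mem_range.mpr (by omega)) (mem_range.mpr hmk)
    have hexp2 : ∑ j ∈ range k, e j = e t + e m + ∑ j ∈ ((range k).erase t).erase m, e j :=
      eg_expand2 e htmne (mem_range.mpr (by omega)) (mem_range.mpr hmk)
    have hcong : ∑ j ∈ ((range k).erase t).erase m, e' j
        = ∑ j ∈ ((range k).erase t).erase m, e j :=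
      sum_congr rfl (fun j hj => by
        simp only [mem_erase] at hj
        exact hoff j hj.2.1 hj.1)
    have h2 : ∑ j ∈ Ico k n, min (e' j) k = ∑ j ∈ Ico k n, min (e j) k :=
      sum_congr rfl (fun j hj => by
        simp only [mem_Ico] at hj
        rw [hoff j (by omega) (by omega)])
    have h5 := hEG k hk1 hkn
    omega
  · rcases lt_or_ge t k with htk | hkt
    · -- Case C2 : t < k ≤ m
      have hexp1 : ∑ j ∈ range k, e' j = e' t + ∑ j ∈ (range k).erase t, e' j :=
        eg_expand1 e' (mem_range.mpr htk)
      have hexp2 : ∑ j ∈ range k, e j = e t + ∑ j ∈ (range k).erase t, e j :=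
        eg_expand1 e (mem_range.mpr htk)
      have hcong : ∑ j ∈ (range k).erase t, e' j = ∑ j ∈ (range k).erase t, e j :=
        sum_congr rfl (fun j hj => by
          simp only [mem_erase, mem_range] at hj
          exact hoff j hj.1 (by omega))
      have hexp3 : ∑ j ∈ Ico k n, min (e' j) k
          = min (e' m) k + ∑ j ∈ (Ico k n).erase m, min (e' j) k :=
        eg_expand1 (fun j => min (e' j) k) (mem_Ico.mpr ⟨hkm, hmn⟩)
      have hexp4 : ∑ j ∈ Ico k n, min (e j) k
          = min (e m) k + ∑ j ∈ (Ico k n).erase m, min (e j) k :=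
        eg_expand1 (fun j => min (e j) k) (mem_Ico.mpr ⟨hkm, hmn⟩)
      have hcong2 : ∑ j ∈ (Ico k n).erase m, min (e' j) k
          = ∑ j ∈ (Ico k n).erase m, min (e j) k :=
        sum_congr rfl (fun j hj => by
          simp only [mem_erase, mem_Ico] at hj
          rw [hoff j (by omega) hj.1])
      have hmin : min (e m) k ≤ min (e' m) k + 1 := by rw [he'm]; omega
      have h5 := hEG k hk1 hkn
      omega
    · -- Case C3 : k ≤ t
      have h1 : ∑ j ∈ range k, e' j = ∑ j ∈ range k, e j :=
        sum_congr rfl (fun j hj => by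
          simp only [mem_range] at hj
          exact hoff j (by omega) (by omega))
      rcases lt_or_ge k (e m) with hem | hem
      · -- (a) no drop anywhere
        have h2 : ∑ j ∈ Ico k n, min (e' j) k = ∑ j ∈ Ico k n, min (e j) k :=
          sum_congr rfl (fun j hj => by
            by_cases hj' : j = t ∨ j = m
            · have h3 : k < e j := by
                rcases hj' with h | h <;> subst h <;> omega
              rw [hdef j, if_pos hj']
              omega
            · push_neg at hj'
              exact congrArg (min · k) (hoff j hj'.1 hj'.2))
        have h5 := hEG k hk1 hkn
        omega
      · rcases lt_or_ge k (e 0) with hD | hD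
        · -- (b) drop only at m : use claim A
          have hexp3 : ∑ j ∈ Ico k n, min (e' j) k
              = min (e' m) k + ∑ j ∈ (Ico k n).erase m, min (e' j) k :=
            eg_expand1 (fun j => min (e' j) k) (mem_Ico.mpr ⟨by omega, hmn⟩)
          have hexp4 : ∑ j ∈ Ico k n, min (e j) k
              = min (e m) k + ∑ j ∈ (Ico k n).erase m, min (e j) k :=
            eg_expand1 (fun j => min (e j) k) (mem_Ico.mpr ⟨by omega, hmn⟩)
          have hcong2 : ∑ j ∈ (Ico k n).erase m, min (e' j) k
              = ∑ j ∈ (Ico k n).erase m, min (e j) k :=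
            sum_congr rfl (fun j hj => by
              simp only [mem_erase, mem_Ico] at hj
              by_cases hjt : j = t
              · subst hjt
                rw [he't]
                omega
              · rw [hoff j hjt hj.1])
          have hmin : min (e m) k ≤ min (e' m) k + 1 := by rw [he'm]; omega
          have h5 := eg_claimA n e he hz hEG t m k ht htm hmn hm1 hk1 hkt hem hD
          omega
        · -- (c) drops at t and m : use claim B
          have hexp3 : ∑ j ∈ Ico k n, min (e' j) k
              = min (e' t) k + min (e' m) k + ∑ j ∈ ((Ico k n).erase t).erase m, min (e' j) k :=
            eg_expand2 (fun j => min (e' j) k) htmne (mem_Ico.mpr ⟨hkt, by omega⟩)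
              (mem_Ico.mpr ⟨by omega, hmn⟩)
          have hexp4 : ∑ j ∈ Ico k n, min (e j) k
              = min (e t) k + min (e m) k + ∑ j ∈ ((Ico k n).erase t).erase m, min (e j) k :=
            eg_expand2 (fun j => min (e j) k) htmne (mem_Ico.mpr ⟨hkt, by omega⟩)
              (mem_Ico.mpr ⟨by omega, hmn⟩)
          have hcong2 : ∑ j ∈ ((Ico k n).erase t).erase m, min (e' j) k
              = ∑ j ∈ ((Ico k n).erase t).erase m, min (e j) k :=
            sum_congr rfl (fun j hj => by
              simp only [mem_erase] at hj
              rw [hoff j hj.2.1 hj.1])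
          have hmin1 : min (e t) k ≤ min (e' t) k + 1 := by rw [he't, het]; omega
          have hmin2 : min (e m) k ≤ min (e' m) k + 1 := by rw [he'm]; omega
          have h5 := eg_claimB n e he hsum t m k ht htm hmn hm1 hk1 hkt hD
          omega


lemma eg_card_filter_lt (n k : ℕ) (h : k ≤ n) :
    (univ.filter (fun i : Fin n => (i : ℕ) < k)).card = k := by
  have h2 := Fin.sum_univ_eq_sum_range (fun j => if j < k then (1:ℕ) else 0) n
  rw [Finset.card_filter]
  calc (∑ i : Fin n, if (i:ℕ) < k then (1:ℕ) else 0)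
      = ∑ j ∈ range n, (if j < k then (1:ℕ) else 0) := h2
    _ = ∑ j ∈ (range n).filter (fun j => j < k), (1:ℕ) := (Finset.sum_filter _ _).symm
    _ = k := by
        rw [show (range n).filter (fun j => j < k) = range k from by
            ext j; simp only [mem_filter, mem_range]; omega]
        simp

lemma eg_necessary {n : ℕ} (G : SimpleGraph (Fin n)) [DecidableRel G.Adj]
    (k : ℕ) (hk1 : 1 ≤ k) (hkn : k ≤ n) :
    ∑ i ∈ univ.filter (fun i : Fin n => (i : ℕ) < k), G.degree i
      ≤ k * (k-1) + ∑ i ∈ univ.filter (fun i : Fin n => k ≤ (i : ℕ)), min (G.degree i) k := by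
  classical
  set A := univ.filter (fun i : Fin n => (i : ℕ) < k) with hA
  set B := univ.filter (fun i : Fin n => k ≤ (i : ℕ)) with hB
  have hcardA : A.card = k := eg_card_filter_lt n k hkn
  have hdeg : ∀ i : Fin n, G.degree i
      = (A.filter (G.Adj i)).card + (B.filter (G.Adj i)).card := by
    intro i
    rw [← SimpleGraph.card_neighborFinset_eq_degree]
    have hu : G.neighborFinset i = (A.filter (G.Adj i)) ∪ (B.filter (G.Adj i)) := by
      ext j
      simp only [SimpleGraph.mem_neighborFinset, mem_union, mem_filter, hA, hB, mem_univ,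
        true_and]
      constructor
      · intro h; rcases lt_or_ge (j:ℕ) k with h2 | h2
        · exact Or.inl ⟨h2, h⟩
        · exact Or.inr ⟨h2, h⟩
      · rintro (⟨_, h⟩ | ⟨_, h⟩) <;> exact h
    have hdisj : Disjoint (A.filter (G.Adj i)) (B.filter (G.Adj i)) := by
      rw [Finset.disjoint_left]
      intro j hj1 hj2
      simp only [hA, hB, mem_filter, mem_univ, true_and] at hj1 hj2
      omega
    rw [hu, card_union_of_disjoint hdisj]
  -- bound 1 : within A
  have hb1 : ∀ i ∈ A, (A.filter (G.Adj i)).card ≤ k - 1 := by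
    intro i hi
    have hsub : A.filter (G.Adj i) ⊆ A.erase i := by
      intro j hj
      simp only [mem_filter] at hj
      exact mem_erase.mpr ⟨fun h => G.irrefl (h ▸ hj.2), hj.1⟩
    calc (A.filter (G.Adj i)).card ≤ (A.erase i).card := card_le_card hsub
      _ = k - 1 := by rw [card_erase_of_mem hi, hcardA]
  -- double counting
  have hdc : ∑ i ∈ A, (B.filter (G.Adj i)).card = ∑ j ∈ B, (A.filter (G.Adj j)).card := by
    have h1 : ∀ (s u : Finset (Fin n)), ∑ i ∈ s, (u.filter (G.Adj i)).card
        = ∑ i ∈ s, ∑ j ∈ u, (if G.Adj i j then 1 else 0) := by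
      intro s u
      refine sum_congr rfl (fun i _ => ?_)
      rw [Finset.card_filter]
    rw [h1, h1, Finset.sum_comm]
    refine sum_congr rfl (fun i _ => sum_congr rfl (fun j _ => ?_))
    simp [G.adj_comm]
  -- bound 2
  have hb2 : ∀ j ∈ B, (A.filter (G.Adj j)).card ≤ min (G.degree j) k := by
    intro j _
    refine le_min ?_ ?_
    · rw [← SimpleGraph.card_neighborFinset_eq_degree]
      apply card_le_card
      intro i hi
      simp only [mem_filter] at hi
      exact (SimpleGraph.mem_neighborFinset _ _ _).mpr hi.2
    · calc (A.filter (G.Adj j)).card ≤ A.card := card_le_card (filter_subset _ _)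
        _ = k := hcardA
  calc ∑ i ∈ A, G.degree i
      = ∑ i ∈ A, (A.filter (G.Adj i)).card + ∑ i ∈ A, (B.filter (G.Adj i)).card := by
        rw [← Finset.sum_add_distrib]; exact sum_congr rfl (fun i _ => hdeg i)
    _ ≤ ∑ i ∈ A, (k-1) + ∑ j ∈ B, min (G.degree j) k := by
        rw [hdc]
        exact Nat.add_le_add (sum_le_sum hb1) (sum_le_sum hb2)
    _ = k * (k-1) + ∑ j ∈ B, min (G.degree j) k := by
        rw [Finset.sum_const, hcardA, smul_eq_mul]


variable {V : Type*} [Fintype V] [DecidableEq V]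

lemma eg_addEdge (G : SimpleGraph V) [DecidableRel G.Adj]
    {a b : V} (hab : a ≠ b) (hnadj : ¬ G.Adj a b) :
    ∃ (H : SimpleGraph V) (_ : DecidableRel H.Adj),
      (∀ i, H.degree i = G.degree i + (if i = a ∨ i = b then 1 else 0)) := by
  classical
  let P : V → V → Prop := fun x y => G.Adj x y ∨ (x = a ∧ y = b) ∨ (x = b ∧ y = a)
  let H : SimpleGraph V := SimpleGraph.fromRel P
  have hne' : ∀ {x y : V}, G.Adj x y → x ≠ y := fun h => G.ne_of_adj h
  have hchar : ∀ x y, H.Adj x y ↔ (G.Adj x y ∨ (x = a ∧ y = b) ∨ (x = b ∧ y = a)) ∧ x ≠ y := by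
    intro x y
    simp only [H, SimpleGraph.fromRel_adj, P]
    constructor
    · rintro ⟨hne, h | h⟩
      · exact ⟨h, hne⟩
      · refine ⟨?_, hne⟩
        rcases h with h | ⟨h1, h2⟩ | ⟨h1, h2⟩
        · exact Or.inl h.symm
        · exact Or.inr (Or.inr ⟨h2, h1⟩)
        · exact Or.inr (Or.inl ⟨h2, h1⟩)
    · rintro ⟨h, hne⟩
      exact ⟨hne, Or.inl h⟩
  letI instH : DecidableRel H.Adj := Classical.decRel _
  refine ⟨H, instH, fun i => ?_⟩
  rw [← SimpleGraph.card_neighborFinset_eq_degree, ← SimpleGraph.card_neighborFinset_eq_degree]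
  by_cases hia : i = a
  · have hN : H.neighborFinset i = insert b (G.neighborFinset i) := by
      ext y
      simp only [SimpleGraph.mem_neighborFinset, hchar, mem_insert]
      subst hia
      constructor
      · rintro ⟨h | ⟨h1, h2⟩ | ⟨h1, h2⟩, hne⟩
        · exact Or.inr h
        · exact Or.inl h2
        · exact absurd h1 hab
      · rintro (rfl | h)
        · exact ⟨Or.inr (Or.inl ⟨rfl, rfl⟩), hab⟩
        · exact ⟨Or.inl h, hne' h⟩
    rw [hN, card_insert_of_notMem (by
      simp only [SimpleGraph.mem_neighborFinset]
      subst hia; exact hnadj)]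
    simp [hia]
  · by_cases hib : i = b
    · have hN : H.neighborFinset i = insert a (G.neighborFinset i) := by
        ext y
        simp only [SimpleGraph.mem_neighborFinset, hchar, mem_insert]
        subst hib
        constructor
        · rintro ⟨h | ⟨h1, h2⟩ | ⟨h1, h2⟩, hne⟩
          · exact Or.inr h
          · exact absurd h1 (Ne.symm hab)
          · exact Or.inl h2
        · rintro (rfl | h)
          · exact ⟨Or.inr (Or.inr ⟨rfl, rfl⟩), Ne.symm hab⟩
          · exact ⟨Or.inl h, hne' h⟩
      rw [hN, card_insert_of_notMem (by
        simp only [SimpleGraph.mem_neighborFinset]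
        subst hib; intro h; exact hnadj (G.adj_symm h))]
      simp [hib, hia]
    · have hN : H.neighborFinset i = G.neighborFinset i := by
        ext y
        simp only [SimpleGraph.mem_neighborFinset, hchar]
        constructor
        · rintro ⟨h | ⟨h1, h2⟩ | ⟨h1, h2⟩, hne⟩
          · exact h
          · exact absurd h1 hia
          · exact absurd h1 hib
        · intro h
          exact ⟨Or.inl h, hne' h⟩
      rw [hN]
      simp [hia, hib]



lemma eg_card_insert_erase {s : Finset V} {add rem : V} (hrem : rem ∈ s) (hadd : add ∉ s) :
    (insert add (s.erase rem)).card = s.card := by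
  rw [card_insert_of_notMem (fun h => hadd (mem_of_mem_erase h)), card_erase_of_mem hrem]
  have := card_pos.mpr ⟨rem, hrem⟩
  omega

lemma eg_swap (G : SimpleGraph V) [DecidableRel G.Adj] {t m u v : V}
    (htm : G.Adj t m) (huv : G.Adj u v) (htu : ¬ G.Adj t u) (hmv : ¬ G.Adj m v)
    (netu : t ≠ u) (nemv : m ≠ v) (netv : t ≠ v) (nemu : m ≠ u) :
    ∃ (H : SimpleGraph V) (_ : DecidableRel H.Adj),
      (∀ i, H.degree i = G.degree i) ∧ ¬ H.Adj t m := by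
  classical
  have netm : t ≠ m := G.ne_of_adj htm
  have neuv : u ≠ v := G.ne_of_adj huv
  have hne' : ∀ {x y : V}, G.Adj x y → x ≠ y := fun h => G.ne_of_adj h
  let P : V → V → Prop := fun x y =>
    (G.Adj x y ∧ ¬(x = t ∧ y = m) ∧ ¬(x = m ∧ y = t) ∧ ¬(x = u ∧ y = v) ∧ ¬(x = v ∧ y = u))
    ∨ (x = t ∧ y = u) ∨ (x = u ∧ y = t) ∨ (x = m ∧ y = v) ∨ (x = v ∧ y = m)
  let H : SimpleGraph V := SimpleGraph.fromRel P
  have hPsymm : ∀ x y, P x y → P y x := by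
    intro x y h
    rcases h with ⟨h0, h1, h2, h3, h4⟩ | h
    · exact Or.inl ⟨G.adj_symm h0, fun ⟨a, b⟩ => h2 ⟨b, a⟩, fun ⟨a, b⟩ => h1 ⟨b, a⟩,
        fun ⟨a, b⟩ => h4 ⟨b, a⟩, fun ⟨a, b⟩ => h3 ⟨b, a⟩⟩
    · tauto
  have hchar : ∀ x y, H.Adj x y ↔
      ((G.Adj x y ∧ ¬(x = t ∧ y = m) ∧ ¬(x = m ∧ y = t) ∧ ¬(x = u ∧ y = v) ∧ ¬(x = v ∧ y = u))
        ∨ (x = t ∧ y = u) ∨ (x = u ∧ y = t) ∨ (x = m ∧ y = v) ∨ (x = v ∧ y = m)) ∧ x ≠ y := by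
    intro x y
    show (SimpleGraph.fromRel P).Adj x y ↔ _
    rw [SimpleGraph.fromRel_adj]
    constructor
    · rintro ⟨hne, h | h⟩
      · exact ⟨h, hne⟩
      · exact ⟨hPsymm y x h, hne⟩
    · rintro ⟨h, hne⟩
      exact ⟨hne, Or.inl h⟩
  have charT : ∀ y, H.Adj t y ↔ ((G.Adj t y ∧ y ≠ m) ∨ y = u) := by
    intro y
    rw [hchar]
    constructor
    · rintro ⟨⟨h0, h1, h2, h3, h4⟩ | h, hne⟩
      · exact Or.inl ⟨h0, fun hy => h1 ⟨rfl, hy⟩⟩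
      · tauto
    · rintro (⟨h0, hym⟩ | rfl)
      · exact ⟨Or.inl ⟨h0, fun ⟨_, hy⟩ => hym hy, fun ⟨h, _⟩ => netm h,
          fun ⟨h, _⟩ => netu h, fun ⟨h, _⟩ => netv h⟩, hne' h0⟩
      · exact ⟨Or.inr (Or.inl ⟨rfl, rfl⟩), netu⟩
  have charU : ∀ y, H.Adj u y ↔ ((G.Adj u y ∧ y ≠ v) ∨ y = t) := by
    intro y
    rw [hchar]
    constructor
    · rintro ⟨⟨h0, h1, h2, h3, h4⟩ | h, hne⟩
      · exact Or.inl ⟨h0, fun hy => h3 ⟨rfl, hy⟩⟩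
      · tauto
    · rintro (⟨h0, hyv⟩ | rfl)
      · exact ⟨Or.inl ⟨h0, fun ⟨h, _⟩ => netu h.symm, fun ⟨h, _⟩ => nemu h.symm,
          fun ⟨_, hy⟩ => hyv hy, fun ⟨h, _⟩ => neuv h⟩, hne' h0⟩
      · exact ⟨Or.inr (Or.inr (Or.inl ⟨rfl, rfl⟩)), Ne.symm netu⟩
  have charM : ∀ y, H.Adj m y ↔ ((G.Adj m y ∧ y ≠ t) ∨ y = v) := by
    intro y
    rw [hchar]
    constructor
    · rintro ⟨⟨h0, h1, h2, h3, h4⟩ | h, hne⟩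
      · exact Or.inl ⟨h0, fun hy => h2 ⟨rfl, hy⟩⟩
      · tauto
    · rintro (⟨h0, hyt⟩ | rfl)
      · exact ⟨Or.inl ⟨h0, fun ⟨h, _⟩ => netm h.symm, fun ⟨_, hy⟩ => hyt hy,
          fun ⟨h, _⟩ => nemu h, fun ⟨h, _⟩ => nemv h⟩, hne' h0⟩
      · exact ⟨Or.inr (Or.inr (Or.inr (Or.inl ⟨rfl, rfl⟩))), nemv⟩
  have charV : ∀ y, H.Adj v y ↔ ((G.Adj v y ∧ y ≠ u) ∨ y = m) := by
    intro y
    rw [hchar]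
    constructor
    · rintro ⟨⟨h0, h1, h2, h3, h4⟩ | h, hne⟩
      · exact Or.inl ⟨h0, fun hy => h4 ⟨rfl, hy⟩⟩
      · tauto
    · rintro (⟨h0, hyu⟩ | rfl)
      · exact ⟨Or.inl ⟨h0, fun ⟨h, _⟩ => netv h.symm, fun ⟨h, _⟩ => nemv h.symm,
          fun ⟨h, _⟩ => neuv h.symm, fun ⟨_, hy⟩ => hyu hy⟩, hne' h0⟩
      · exact ⟨Or.inr (Or.inr (Or.inr (Or.inr ⟨rfl, rfl⟩))), Ne.symm nemv⟩
  have charO : ∀ x y, x ≠ t → x ≠ m → x ≠ u → x ≠ v → (H.Adj x y ↔ G.Adj x y) := by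
    intro x y hxt hxm hxu hxv
    rw [hchar]
    constructor
    · rintro ⟨⟨h0, _⟩ | h, hne⟩
      · exact h0
      · tauto
    · intro h0
      exact ⟨Or.inl ⟨h0, fun ⟨h, _⟩ => hxt h, fun ⟨h, _⟩ => hxm h,
        fun ⟨h, _⟩ => hxu h, fun ⟨h, _⟩ => hxv h⟩, hne' h0⟩
  letI instH : DecidableRel H.Adj := Classical.decRel _
  refine ⟨H, instH, fun i => ?_, ?_⟩
  · rw [← SimpleGraph.card_neighborFinset_eq_degree, ← SimpleGraph.card_neighborFinset_eq_degree]
    by_cases hit : i = t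
    · subst hit
      have hN : H.neighborFinset i = insert u ((G.neighborFinset i).erase m) := by
        ext y
        simp only [SimpleGraph.mem_neighborFinset, mem_insert, mem_erase, charT]
        tauto
      rw [hN]
      exact eg_card_insert_erase (by simpa [SimpleGraph.mem_neighborFinset] using htm)
        (by simpa [SimpleGraph.mem_neighborFinset] using htu)
    · by_cases him : i = m
      · subst him
        have hN : H.neighborFinset i = insert v ((G.neighborFinset i).erase t) := by
          ext y
          simp only [SimpleGraph.mem_neighborFinset, mem_insert, mem_erase, charM]
          tauto
        rw [hN]
        exact eg_card_insert_erase (by simpa [SimpleGraph.mem_neighborFinset] using G.adj_symm htm)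
          (by simpa [SimpleGraph.mem_neighborFinset] using hmv)
      · by_cases hiu : i = u
        · subst hiu
          have hN : H.neighborFinset i = insert t ((G.neighborFinset i).erase v) := by
            ext y
            simp only [SimpleGraph.mem_neighborFinset, mem_insert, mem_erase, charU]
            tauto
          rw [hN]
          exact eg_card_insert_erase (by simpa [SimpleGraph.mem_neighborFinset] using huv)
            (by simpa [SimpleGraph.mem_neighborFinset] using fun h => htu (G.adj_symm h))
        · by_cases hiv : i = v
          · subst hiv
            have hN : H.neighborFinset i = insert m ((G.neighborFinset i).erase u) := by
              ext y
              simp only [SimpleGraph.mem_neighborFinset, mem_insert, mem_erase, charV]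
              tauto
            rw [hN]
            exact eg_card_insert_erase
              (by simpa [SimpleGraph.mem_neighborFinset] using G.adj_symm huv)
              (by simpa [SimpleGraph.mem_neighborFinset] using fun h => hmv (G.adj_symm h))
          · have hN : H.neighborFinset i = G.neighborFinset i := by
              ext y
              simp only [SimpleGraph.mem_neighborFinset]
              exact charO i y hit him hiu hiv
            rw [hN]
  · rw [charT]
    push_neg
    exact ⟨fun _ => rfl, nemu⟩

lemma eg_realize_step (G : SimpleGraph V) [DecidableRel G.Adj] {t m : V} (htm : t ≠ m)
    (C : Finset V) (hCt : t ∉ C) (hCm : m ∉ C)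
    (hC3 : ∀ u ∈ C, G.degree m < G.degree u) (hC4 : G.degree t ≤ C.card) :
    ∃ (H : SimpleGraph V) (_ : DecidableRel H.Adj),
      ∀ i, H.degree i = G.degree i + (if i = t ∨ i = m then 1 else 0) := by
  classical
  by_cases hadj : G.Adj t m
  · have hmNt : m ∈ G.neighborFinset t := by
      simpa [SimpleGraph.mem_neighborFinset] using hadj
    obtain ⟨u, huC, hu⟩ : ∃ u ∈ C, ¬ G.Adj t u := by
      by_contra h
      push_neg at h
      have hsub : C ⊆ (G.neighborFinset t).erase m := fun x hx =>
        mem_erase.mpr ⟨fun he => hCm (he ▸ hx),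
          (SimpleGraph.mem_neighborFinset _ _ _).mpr (h x hx)⟩
      have h2 := card_le_card hsub
      rw [card_erase_of_mem hmNt, SimpleGraph.card_neighborFinset_eq_degree] at h2
      have hdpos : 1 ≤ G.degree t := by
        rw [← SimpleGraph.card_neighborFinset_eq_degree]
        exact card_pos.mpr ⟨m, hmNt⟩
      omega
    have hut : u ≠ t := fun h => hCt (h ▸ huC)
    have hum : u ≠ m := fun h => hCm (h ▸ huC)
    have htNu : t ∉ G.neighborFinset u := by
      simp only [SimpleGraph.mem_neighborFinset]
      exact fun h => hu (G.adj_symm h)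
    obtain ⟨v, hvNu, hvm⟩ : ∃ v ∈ G.neighborFinset u, v ∉ insert m (G.neighborFinset m) := by
      by_contra h
      push_neg at h
      have hsub : G.neighborFinset u ⊆ (insert m (G.neighborFinset m)).erase t := fun x hx =>
        mem_erase.mpr ⟨fun he => htNu (he ▸ hx), h x hx⟩
      have h2 := card_le_card hsub
      have htin : t ∈ insert m (G.neighborFinset m) := by
        simp [SimpleGraph.mem_neighborFinset, G.adj_symm hadj]
      rw [card_erase_of_mem htin,
        card_insert_of_notMem (by simp [SimpleGraph.mem_neighborFinset])] at h2
      rw [SimpleGraph.card_neighborFinset_eq_degree] at h2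
      rw [SimpleGraph.card_neighborFinset_eq_degree] at h2
      have := hC3 u huC
      omega
    simp only [mem_insert, SimpleGraph.mem_neighborFinset] at hvNu hvm
    push_neg at hvm
    have hvt : v ≠ t := fun h => htNu (by simp [SimpleGraph.mem_neighborFinset, ← h, hvNu])
    obtain ⟨H1, inst1, hdeg1, hnadj1⟩ :=
      eg_swap G hadj hvNu hu hvm.2 (Ne.symm hut) (Ne.symm hvm.1) (Ne.symm hvt) (Ne.symm hum)
    obtain ⟨H, inst, hdeg⟩ := @eg_addEdge _ _ _ H1 inst1 _ _ htm hnadj1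
    refine ⟨H, inst, fun i => ?_⟩
    rw [hdeg i, hdeg1 i]
  · obtain ⟨H, inst, hdeg⟩ := eg_addEdge G htm hadj
    exact ⟨H, inst, hdeg⟩

lemma eg_zero_case {n : ℕ} (d : Fin n → ℕ) (h : ∀ i, d i = 0) :
    ∃ (G : SimpleGraph (Fin n)) (_ : DecidableRel G.Adj), ∀ i, G.degree i = d i := by
  classical
  refine ⟨⊥, Classical.decRel _, fun i => ?_⟩
  rw [h i, ← SimpleGraph.card_neighborFinset_eq_degree, card_eq_zero]
  ext y
  simp [SimpleGraph.mem_neighborFinset]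

lemma eg_sufficient : ∀ (N : ℕ) (n : ℕ) (d : Fin n → ℕ), Antitone d → Even (∑ i, d i) →
    (∀ k, 1 ≤ k → k ≤ n →
      ∑ i ∈ univ.filter (fun i : Fin n => (i : ℕ) < k), d i ≤
        k * (k - 1) + ∑ i ∈ univ.filter (fun i : Fin n => k ≤ (i : ℕ)), min (d i) k) →
    (∑ i, d i ≤ N) →
    ∃ (G : SimpleGraph (Fin n)) (_ : DecidableRel G.Adj), ∀ i, G.degree i = d i := by
  intro N
  induction N with
  | zero =>
    intro n d _ _ _ hsum
    exact eg_zero_case d (fun i => by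
      have := Finset.single_le_sum (fun j _ => Nat.zero_le (d j)) (mem_univ i)
      omega)
  | succ N ih =>
    intro n d hd heven hEG hsum
    by_cases hpos : ∑ i, d i = 0
    · exact eg_zero_case d (fun i => by
        have := Finset.single_le_sum (fun j _ => Nat.zero_le (d j)) (mem_univ i)
        omega)
    -- setup
    set e : ℕ → ℕ := fun j => if h : j < n then d ⟨j, h⟩ else 0 with hedef
    have hdi : ∀ i : Fin n, d i = e i.val := fun i => by simp [hedef]
    have he : Antitone e := by
      intro a b hab
      simp only [hedef]
      split_ifs with h1 h2 h2
      · exact hd (by exact_mod_cast hab : (⟨a, h2⟩ : Fin n) ≤ ⟨b, h1⟩)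
      · omega
      · exact Nat.zero_le _
      · exact Nat.zero_le _
    have hz : ∀ j, n ≤ j → e j = 0 := fun j hj => by simp [hedef]; omega
    have hsum_eq : ∑ i, d i = ∑ j ∈ range n, e j := by
      rw [show ∑ i, d i = ∑ i : Fin n, e i.val from sum_congr rfl (fun i _ => hdi i)]
      exact Fin.sum_univ_eq_sum_range e n
    have hEGe : ∀ k, 1 ≤ k → k ≤ n →
        ∑ j ∈ range k, e j ≤ k*(k-1) + ∑ j ∈ Ico k n, min (e j) k := by
      intro k hk1 hkn
      have h1 := hEG k hk1 hkn
      rw [show ∑ i ∈ univ.filter (fun i : Fin n => (i : ℕ) < k), d i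
            = ∑ i ∈ univ.filter (fun i : Fin n => (i : ℕ) < k), e i.val from
          sum_congr rfl (fun i _ => hdi i),
        eg_sum_fin_val n (fun j => j < k) e, eg_range_filter_lt n k hkn] at h1
      rwa [show ∑ i ∈ univ.filter (fun i : Fin n => k ≤ (i : ℕ)), min (d i) k
            = ∑ i ∈ univ.filter (fun i : Fin n => k ≤ (i : ℕ)), (fun x => min (e x) k) i.val from
          sum_congr rfl (fun i _ => by rw [hdi i]),
        eg_sum_fin_val n (fun j => k ≤ j) (fun x => min (e x) k),
        eg_range_filter_le n k] at h1
    have hn : 0 < n := by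
      rcases Nat.eq_zero_or_pos n with rfl | h
      · simp at hpos
      · exact h
    rw [hsum_eq] at heven hpos hsum
    -- m : last positive index
    obtain ⟨c1, hc1n, hc1⟩ := eg_threshold n e he hz 0
    have hc1pos : 0 < c1 := by
      by_contra h
      push_neg at h
      apply hpos
      apply Finset.sum_eq_zero
      intro j _
      have := (hc1 j).1
      omega
    set m : ℕ := c1 - 1 with hmdef
    have hmn : m < n := by omega
    have hm1 : 1 ≤ e m := (hc1 m).2 (by omega)
    have hmz : ∀ j, m < j → e j = 0 := by
      intro j hj
      have := (hc1 j).1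
      omega
    have he0 : 1 ≤ e 0 := le_trans hm1 (he (Nat.zero_le m))
    -- t : argmax threshold
    obtain ⟨c2, hc2n, hc2⟩ := eg_threshold n e he hz (e 0 - 1)
    have hc2pos : 0 < c2 := by
      have := (hc2 0).1 (by omega)
      omega
    set targ : ℕ := c2 - 1 with htargdef
    have htarg : ∀ i, i ≤ targ → e i = e 0 := by
      intro i hi
      have h1 := (hc2 i).2 (by omega)
      have h2 := he (Nat.zero_le i)
      omega
    have htargm : targ ≤ m := by
      have h1 := (hc1 targ).1 (by rw [htarg targ le_rfl]; omega)
      omega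
    -- e 0 ≤ m via EG at k = 1
    have hD_le_m : e 0 ≤ m := by
      have h1 := hEGe 1 le_rfl hn
      rw [show ∑ j ∈ range 1, e j = e 0 by simp] at h1
      have h2 : ∑ j ∈ Ico 1 n, min (e j) 1 = m := by
        rw [show ∑ j ∈ Ico 1 n, min (e j) 1
              = ∑ j ∈ Ico 1 n, (if j < c1 then 1 else 0) from
            sum_congr rfl (fun j hj => by
              have h3 := (hc1 j).1
              have h4 := (hc1 j).2
              by_cases hc : j < c1
              · have := h4 hc; simp [hc]; omega
              · have : ¬ (0 < e j) := fun hh => hc (h3 hh)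
                simp [hc]; omega),
          ← Finset.sum_filter]
        rw [show (Ico 1 n).filter (fun j => j < c1) = Ico 1 c1 from by
          ext j; simp only [mem_filter, mem_Ico]; omega]
        simp [Nat.card_Ico, hmdef]
      omega
    have hm1' : 1 ≤ m := by omega
    -- t
    obtain ⟨t, htm, ht, hkey⟩ : ∃ t, t < m ∧ (∀ i, i ≤ t → e i = e 0) ∧
        (∀ j, t < j → j ≠ m → e j ≤ e 0 - 1) := by
      by_cases hcase : targ = m
      · exact ⟨m - 1, by omega, fun i hi => htarg i (by omega),
          fun j hj hjm => by have := hmz j (by omega); omega⟩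
      · refine ⟨targ, by omega, htarg, fun j hj hjm => ?_⟩
        have h2 := (hc2 j).1
        omega
    have htn : t < n := by omega
    -- d', e'
    set tF : Fin n := ⟨t, htn⟩ with htFdef
    set mF : Fin n := ⟨m, hmn⟩ with hmFdef
    have htmF : tF ≠ mF := by
      simp only [htFdef, hmFdef, Ne, Fin.mk.injEq]
      omega
    set e' : ℕ → ℕ := fun j => if j = t ∨ j = m then e j - 1 else e j with he'def
    set d' : Fin n → ℕ := fun i => if i = tF ∨ i = mF then d i - 1 else d i with hd'def
    have hd'e' : ∀ i : Fin n, d' i = e' i.val := by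
      intro i
      simp only [hd'def, he'def, htFdef, hmFdef, Fin.ext_iff]
      rw [hdi i]
    have he'def' : ∀ j, e' j = if j = t ∨ j = m then e j - 1 else e j := fun j => rfl
    -- antitone e'
    have he' : Antitone e' := by
      intro a b hab
      rcases eq_or_lt_of_le hab with rfl | hlt
      · exact le_rfl
      by_cases hbt : b = t
      · have hb : e' b = e b - 1 := by rw [he'def' b, if_pos (Or.inl hbt)]
        have hbe : e b = e 0 := ht b (le_of_eq hbt)
        have hant : a ≠ t := by omega
        have hanm : a ≠ m := by omega
        have hav : e' a = e a := by rw [he'def' a, if_neg (by tauto)]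
        have hae : e a = e 0 := ht a (by omega)
        omega
      · by_cases hbm : b = m
        · have hb : e' b = e b - 1 := by rw [he'def' b, if_pos (Or.inr hbm)]
          by_cases hat : a = t
          · have hav : e' a = e a - 1 := by rw [he'def' a, if_pos (Or.inl hat)]
            have h1 : e b ≤ e a := he hab
            omega
          · have hanm : a ≠ m := by omega
            have hav : e' a = e a := by rw [he'def' a, if_neg (by tauto)]
            have h1 : e b ≤ e a := he hab
            omega
        · have hb : e' b = e b := by rw [he'def' b, if_neg (by tauto)]
          by_cases hat : a = t
          · have hav : e' a = e a - 1 := by rw [he'def' a, if_pos (Or.inl hat)]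
            have hae : e a = e 0 := ht a (le_of_eq hat)
            have h1 : e b ≤ e 0 - 1 := hkey b (by omega) hbm
            omega
          · by_cases ham : a = m
            · have hav : e' a = e a - 1 := by rw [he'def' a, if_pos (Or.inr ham)]
              have h1 : e b = 0 := hmz b (by omega)
              omega
            · have hav : e' a = e a := by rw [he'def' a, if_neg (by tauto)]
              have h1 : e b ≤ e a := he hab
              omega
    have hd' : Antitone d' := by
      intro a b hab
      rw [hd'e' a, hd'e' b]
      exact he' (by exact_mod_cast hab)
    -- sums
    have htr : t ∈ range n := mem_range.mpr htn
    have hmr : m ∈ range n := mem_range.mpr hmn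
    have hsum' : ∑ j ∈ range n, e' j + 2 = ∑ j ∈ range n, e j := by
      rw [eg_expand2 e' (by omega) htr hmr, eg_expand2 e (by omega) htr hmr]
      have hcong : ∑ j ∈ ((range n).erase t).erase m, e' j
          = ∑ j ∈ ((range n).erase t).erase m, e j :=
        sum_congr rfl (fun j hj => by
          simp only [mem_erase] at hj
          rw [he'def' j, if_neg (by tauto)])
      rw [hcong, he'def' t, he'def' m, if_pos (Or.inl rfl), if_pos (Or.inr rfl),
        ht t le_rfl]
      omega
    have hsum'd : ∑ i, d' i = ∑ j ∈ range n, e' j := by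
      rw [show ∑ i, d' i = ∑ i : Fin n, e' i.val from sum_congr rfl (fun i _ => hd'e' i)]
      exact Fin.sum_univ_eq_sum_range e' n
    have heven' : Even (∑ i, d' i) := by
      obtain ⟨w, hw⟩ := heven
      rw [hsum'd]
      exact ⟨w - 1, by omega⟩
    have hEG' : ∀ k, 1 ≤ k → k ≤ n →
        ∑ i ∈ univ.filter (fun i : Fin n => (i : ℕ) < k), d' i ≤
          k * (k - 1) + ∑ i ∈ univ.filter (fun i : Fin n => k ≤ (i : ℕ)), min (d' i) k := by
      intro k hk1 hkn
      have h1 := eg_step n e e' he hz hEGe heven t m ht htm hmn hm1 he'def' k hk1 hkn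
      rw [show ∑ i ∈ univ.filter (fun i : Fin n => (i : ℕ) < k), d' i
            = ∑ i ∈ univ.filter (fun i : Fin n => (i : ℕ) < k), e' i.val from
          sum_congr rfl (fun i _ => hd'e' i),
        eg_sum_fin_val n (fun j => j < k) e', eg_range_filter_lt n k hkn]
      rw [show ∑ i ∈ univ.filter (fun i : Fin n => k ≤ (i : ℕ)), min (d' i) k
            = ∑ i ∈ univ.filter (fun i : Fin n => k ≤ (i : ℕ)), (fun x => min (e' x) k) i.val from
          sum_congr rfl (fun i _ => by rw [hd'e' i]),
        eg_sum_fin_val n (fun j => k ≤ j) (fun x => min (e' x) k),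
        eg_range_filter_le n k]
      exact h1
    have hsum'' : ∑ i, d' i ≤ N := by
      rw [hsum'd]; omega
    obtain ⟨G', instG', hdegG'⟩ := ih n d' hd' heven' hEG' hsum''
    -- build C and apply realize_step
    set C : Finset (Fin n) := (univ.filter (fun u : Fin n => (u : ℕ) < m)).erase tF with hCdef
    have hCt : tF ∉ C := notMem_erase _ _
    have hCm : mF ∉ C := by
      simp only [hCdef, mem_erase, mem_filter, hmFdef]
      intro h
      exact absurd h.2.2 (by simp)
    have hCcard : C.card = m - 1 := by
      rw [hCdef, card_erase_of_mem (by
        simp only [mem_filter, mem_univ, true_and, htFdef]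
        exact htm)]
      rw [eg_card_filter_lt n m (by omega)]
    have hvm : (mF : ℕ) = m := rfl
    have hvt : (tF : ℕ) = t := rfl
    have hC3 : ∀ u ∈ C, G'.degree mF < G'.degree u := by
      intro u hu
      simp only [hCdef, mem_erase, mem_filter, mem_univ, true_and] at hu
      obtain ⟨hut, hum⟩ := hu
      rw [hdegG' u, hdegG' mF, hd'e' u, hd'e' mF, hvm]
      have h2 : e' m = e m - 1 := by rw [he'def' m, if_pos (Or.inr rfl)]
      have h3 : e' (u : ℕ) = e (u : ℕ) := by
        rw [he'def' (u : ℕ), if_neg]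
        push_neg
        constructor
        · intro h
          exact hut (Fin.ext (h.trans hvt.symm))
        · omega
      have h4 : e m ≤ e (u : ℕ) := he (by omega)
      omega
    have hC4 : G'.degree tF ≤ C.card := by
      rw [hdegG' tF, hCcard, hd'e' tF, hvt]
      have h2 : e' t = e t - 1 := by rw [he'def' t, if_pos (Or.inl rfl)]
      have h3 : e t = e 0 := ht t le_rfl
      omega
    obtain ⟨H, instH, hdegH⟩ := eg_realize_step G' htmF C hCt hCm hC3 hC4
    refine ⟨H, instH, fun i => ?_⟩
    rw [hdegH i, hdegG' i, hd'e' i, hdi i]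
    by_cases hit : i = tF
    · rw [if_pos (Or.inl hit)]
      have h1 : (i : ℕ) = t := by rw [hit]
      rw [h1]
      have h2 : e' t = e t - 1 := by rw [he'def' t, if_pos (Or.inl rfl)]
      have h3 : e t = e 0 := ht t le_rfl
      omega
    · by_cases him : i = mF
      · rw [if_pos (Or.inr him)]
        have h1 : (i : ℕ) = m := by rw [him]
        rw [h1]
        have h2 : e' m = e m - 1 := by rw [he'def' m, if_pos (Or.inr rfl)]
        omega
      · rw [if_neg (by tauto)]
        have h1 : e' (i : ℕ) = e (i : ℕ) := by
          rw [he'def' (i : ℕ), if_neg]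
          push_neg
          exact ⟨fun h => hit (Fin.ext (h.trans hvt.symm)),
            fun h => him (Fin.ext (h.trans hvm.symm))⟩
        omega


/-- **Erdős–Gallai theorem.** A non-increasing sequence `d : Fin n → ℕ` is the degree
sequence of a simple graph on labeled vertices `0, …, n-1` if and only if the sum of the
degrees is even and, for every `1 ≤ k ≤ n`,
`∑_{i<k} d i ≤ k(k-1) + ∑_{i≥k} min (d i) k`. -/
theorem erdos_gallai (n : ℕ) (d : Fin n → ℕ) (hd : Antitone d) :
    (∃ (G : SimpleGraph (Fin n)) (_ : DecidableRel G.Adj), ∀ i : Fin n, G.degree i = d i) ↔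
      Even (∑ i, d i) ∧
        ∀ k : ℕ, 1 ≤ k → k ≤ n →
          ∑ i ∈ univ.filter (fun i : Fin n => (i : ℕ) < k), d i ≤
            k * (k - 1) +
              ∑ i ∈ univ.filter (fun i : Fin n => k ≤ (i : ℕ)), min (d i) k := by
  constructor
  · rintro ⟨G, instG, hdeg⟩
    constructor
    · rw [show ∑ i, d i = ∑ i, G.degree i from sum_congr rfl (fun i _ => (hdeg i).symm),
        SimpleGraph.sum_degrees_eq_twice_card_edges]
      exact ⟨_, two_mul _⟩
    · intro k hk1 hkn
      rw [show ∑ i ∈ univ.filter (fun i : Fin n => (i : ℕ) < k), d i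
            = ∑ i ∈ univ.filter (fun i : Fin n => (i : ℕ) < k), G.degree i from
          sum_congr rfl (fun i _ => (hdeg i).symm),
        show ∑ i ∈ univ.filter (fun i : Fin n => k ≤ (i : ℕ)), min (d i) k
            = ∑ i ∈ univ.filter (fun i : Fin n => k ≤ (i : ℕ)), min (G.degree i) k from
          sum_congr rfl (fun i _ => by rw [hdeg i])]
      exact eg_necessary G k hk1 hkn
  · rintro ⟨h1, h2⟩
    exact eg_sufficient (∑ i, d i) n d hd h1 h2 le_rfl
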